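/- Let X be a set, F ⊆ X, S a set of subsets of X, B ∈ K_F(S), and R ⊆ B. Then R* = R^{*F}. -/
import Mathlib


namespace SharingPaper

/-- `var(S) = ∪ {G | G ∈ S}`. -/
def varS {α : Type*} (S : Set (Set α)) : Set α := ⋃ G ∈ S, G

/-- Closure `S*`: the least superset of `S` closed under binary unions. -/
def closure {α : Type*} (S : Set (Set α)) : Set (Set α) :=
  ⋂₀ {S' | S ⊆ S' ∧ ∀ G1 ∈ S', ∀ G2 ∈ S', G1 ∪ G2 ∈ S'}

/-- Pairwise union `S1 ⊎ S2`. -/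
def pairUnion {α : Type*} (S1 S2 : Set (Set α)) : Set (Set α) :=
  {G | ∃ G1 ∈ S1, ∃ G2 ∈ S2, G = G1 ∪ G2}

/-- `S^{*F}`: the least superset `S'` of `S` such that `G1 ∪ G2 ∈ S'` whenever
`G1, G2 ∈ S'` and `G1 ∩ G2 ∩ F = ∅`. -/
def closureF {α : Type*} (Fv : Set α) (S : Set (Set α)) : Set (Set α) :=
  ⋂₀ {S' | S ⊆ S' ∧ ∀ G1 ∈ S', ∀ G2 ∈ S', G1 ∩ G2 ∩ Fv = ∅ → G1 ∪ G2 ∈ S'}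

/-- `S1 ⊎_F S2`. -/
def pairUnionF {α : Type*} (Fv : Set α) (S1 S2 : Set (Set α)) : Set (Set α) :=
  {G | ∃ G1 ∈ S1, ∃ G2 ∈ S2, (G1 ≠ G2 → G1 ∩ G2 ∩ Fv = ∅) ∧ G = G1 ∪ G2}

/-- The Filé decomposition `K_F(S)`. -/
def KF {α : Type*} (Fv : Set α) (S : Set (Set α)) : Set (Set (Set α)) :=
  {B | B ⊆ S ∧ Fv ⊆ varS B ∧
    ∀ G1 ∈ B, ∀ G2 ∈ B, G1 ≠ G2 → G1 ∩ G2 ∩ Fv = ∅}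

/-- if `B ∈ K_F(S)` and `R ⊆ B` then `R* = R^{*F}`. -/
theorem stmt10 {α : Type*} (Fv : Set α) (S : Set (Set α))
    (B : Set (Set α)) (hB : B ∈ KF Fv S) (R : Set (Set α)) (hR : R ⊆ B) :
    closure R = closureF Fv R := by
  classical
  obtain ⟨hBS, hFvar, hpair⟩ := hB
  -- basic facts about closureF
  have hsubF : R ⊆ closureF Fv R := fun G hG => fun S' hS' => hS'.1 hG
  have hclF : ∀ G1 ∈ closureF Fv R, ∀ G2 ∈ closureF Fv R,
      G1 ∩ G2 ∩ Fv = ∅ → G1 ∪ G2 ∈ closureF Fv R := by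
    intro G1 h1 G2 h2 hdisj S' hS'
    exact hS'.2 G1 (h1 S' hS') G2 (h2 S' hS') hdisj
  apply Set.Subset.antisymm
  · -- closure R ⊆ closureF Fv R, via finite sUnions
    -- key: any nonempty finite union of elements of R is in closureF
    have key : ∀ (T : Finset (Set α)), T.Nonempty → ↑T ⊆ R → ⋃₀ (↑T : Set (Set α)) ∈ closureF Fv R := by
      intro T hne
      induction hne using Finset.Nonempty.cons_induction with
      | singleton a =>
        intro hsub
        simp only [Finset.coe_singleton, Set.sUnion_singleton]
        exact hsubF (hsub (by simp))
      | cons a T ha hTne ih =>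
        intro hsub
        have haR : a ∈ R := hsub (by simp)
        have hTsub : ↑T ⊆ R := fun x hx => hsub (by simp [hx])
        have hdisj : a ∩ ⋃₀ (↑T : Set (Set α)) ∩ Fv = ∅ := by
          ext x
          simp only [Set.mem_inter_iff, Set.mem_sUnion, Set.mem_empty_iff_false, iff_false]
          rintro ⟨⟨hxa, t, htT, hxt⟩, hxF⟩
          have hne' : a ≠ t := by
            rintro rfl; exact ha htT
          have := hpair a (hR haR) t (hR (hTsub htT)) hne'
          exact absurd (by exact ⟨⟨hxa, hxt⟩, hxF⟩ : x ∈ a ∩ t ∩ Fv) (by simp [this])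
        have : a ∪ ⋃₀ (↑T : Set (Set α)) ∈ closureF Fv R :=
          hclF a (hsubF haR) _ (ih hTsub) hdisj
        simpa [Finset.cons_eq_insert, Set.sUnion_insert] using this
    -- the set of finite nonempty sUnions belongs to the closure family
    intro G hG
    have : G ∈ {G | ∃ T : Finset (Set α), T.Nonempty ∧ ↑T ⊆ R ∧ G = ⋃₀ (↑T : Set (Set α))} := by
      apply hG
      constructor
      · intro a haR
        exact ⟨{a}, Finset.singleton_nonempty a, by simpa using haR, by simp⟩
      · rintro G1 ⟨T1, hne1, hs1, rfl⟩ G2 ⟨T2, hne2, hs2, rfl⟩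
        refine ⟨T1 ∪ T2, Finset.Nonempty.mono Finset.subset_union_left hne1, ?_, ?_⟩
        · intro x hx
          rcases Finset.mem_union.mp hx with h | h
          · exact hs1 h
          · exact hs2 h
        · simp [Set.sUnion_union]
    obtain ⟨T, hne, hsub, rfl⟩ := this
    exact key T hne hsub
  · -- closureF Fv R ⊆ closure R
    intro G hG
    apply hG
    refine ⟨fun a ha => fun S' hS' => hS'.1 ha, ?_⟩
    intro G1 h1 G2 h2 _
    intro S' hS'
    exact hS'.2 G1 (h1 S' hS') G2 (h2 S' hS') 

end SharingPaper
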